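/- Let J : 2^L → ℝ. Suppose that for every set R ⊆ L and every K ⊆ R, the VCG utilities u_l = J(R \ {l}) − J(R) satisfy Σ_{l∈K} u_l ≤ J(R \ K) − J(R). Then J is supermodular. -/

import Mathlib

/-- If for every `R ⊆ L` and every `K ⊆ R` the VCG utilities
`u_l = J(R \ {l}) − J(R)` satisfy `∑_{l∈K} u_l ≤ J(R \ K) − J(R)`, then `J`
is supermodular. -/
theorem stmt_4 {L : Type*} [DecidableEq L] (J : Finset L → ℝ)
    (hcore : ∀ R K : Finset L, K ⊆ R →
      ∑ l ∈ K, (J (R.erase l) - J R) ≤ J (R \ K) - J R) :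
    ∀ S T : Finset L, J S + J T ≤ J (S ∪ T) + J (S ∩ T) := by
  -- local two-element condition
  have local2 : ∀ (A : Finset L) (i l : L), i ≠ l → i ∉ A → l ∉ A →
      J (insert i A) - J A ≤ J (insert i (insert l A)) - J (insert l A) := by
    intro A i l hil hiA hlA
    have hK : ({i, l} : Finset L) ⊆ insert i (insert l A) := by
      intro x hx; simp at hx; rcases hx with h | h <;> simp [h]
    have h := hcore (insert i (insert l A)) {i, l} hK
    have hers : (insert i (insert l A)).erase i = insert l A := by
      apply Finset.erase_insert
      simp [hil, hiA]
    have herl : (insert i (insert l A)).erase l = insert i A := by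
      rw [Finset.insert_comm]
      apply Finset.erase_insert
      simp [hil.symm, hlA]
    have hsd : insert i (insert l A) \ {i, l} = A := by
      ext x
      simp only [Finset.mem_sdiff, Finset.mem_insert, Finset.mem_singleton]
      constructor
      · rintro ⟨h1, h2⟩
        push_neg at h2
        rcases h1 with h | h | h
        · exact absurd h h2.1
        · exact absurd h h2.2
        · exact h
      · intro hx
        refine ⟨Or.inr (Or.inr hx), ?_⟩
        push_neg
        exact ⟨fun h => hiA (h ▸ hx), fun h => hlA (h ▸ hx)⟩
    rw [Finset.sum_pair hil, hers, herl, hsd] at h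
    linarith
  -- monotone differences for a single element
  have step : ∀ (n : ℕ) (U V : Finset L) (i : L), (V \ U).card ≤ n → U ⊆ V → i ∉ V →
      J (insert i U) - J U ≤ J (insert i V) - J V := by
    intro n
    induction n with
    | zero =>
      intro U V i hc hUV hiV
      have : V \ U = ∅ := Finset.card_eq_zero.mp (Nat.le_zero.mp hc)
      have : U = V := Finset.Subset.antisymm hUV (fun x hx => by
        by_contra hxu
        have : x ∈ V \ U := Finset.mem_sdiff.mpr ⟨hx, hxu⟩
        simp [‹V \ U = ∅›] at this)
      rw [this]
    | succ n ih =>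
      intro U V i hc hUV hiV
      by_cases hUV' : V \ U = ∅
      · have : U = V := Finset.Subset.antisymm hUV (fun x hx => by
          by_contra hxu
          have : x ∈ V \ U := Finset.mem_sdiff.mpr ⟨hx, hxu⟩
          simp [hUV'] at this)
        rw [this]
      · obtain ⟨l, hl⟩ := Finset.nonempty_iff_ne_empty.mpr hUV'
        obtain ⟨hlV, hlU⟩ := Finset.mem_sdiff.mp hl
        have hil : i ≠ l := fun h => hiV (h ▸ hlV)
        have hiU : i ∉ U := fun h => hiV (hUV h)
        have h1 := local2 U i l hil hiU hlU
        have hsub : insert l U ⊆ V := Finset.insert_subset hlV hUV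
        have hcard : (V \ insert l U).card ≤ n := by
          have : V \ insert l U = (V \ U).erase l := by
            ext x; simp [Finset.mem_sdiff, Finset.mem_erase]; tauto
          rw [this, Finset.card_erase_of_mem hl]
          omega
        have h2 := ih (insert l U) V i hcard hsub hiV
        linarith
  -- extend to adding a finite disjoint set
  have diff : ∀ (D U V : Finset L), U ⊆ V → Disjoint D V →
      J (U ∪ D) - J U ≤ J (V ∪ D) - J V := by
    intro D
    induction D using Finset.induction_on with
    | empty => intro U V _ _; simp
    | insert a D haD ih =>
      intro U V hUV hdis
      have haV : a ∉ V := Finset.disjoint_left.mp hdis (Finset.mem_insert_self a D)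
      have hdis' : Disjoint D V := (Finset.disjoint_insert_left.mp hdis).2
      have h1 := ih U V hUV hdis'
      have hsub : U ∪ D ⊆ V ∪ D := Finset.union_subset_union_left hUV
      have haVD : a ∉ V ∪ D := by simp [haV, haD]
      have h2 := step ((V ∪ D) \ (U ∪ D)).card (U ∪ D) (V ∪ D) a le_rfl hsub haVD
      have e1 : U ∪ insert a D = insert a (U ∪ D) := by
        ext x; simp
      have e2 : V ∪ insert a D = insert a (V ∪ D) := by
        ext x; simp
      rw [e1, e2]
      linarith
  intro S T
  have h := diff (S \ T) (S ∩ T) T Finset.inter_subset_right Finset.sdiff_disjoint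
  have e1 : S ∩ T ∪ S \ T = S := by ext x; simp; tauto
  have e2 : T ∪ S \ T = S ∪ T := by
    ext x; simp; tauto
  rw [e1, e2] at h
  linarith
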